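/- If T₁, T₂ are CP maps X → B(H) with disjoint minimal Stinespring representations (no nonzero subrepresentation of π_{T₁} is unitarily equivalent to a subrepresentation of π_{T₂}), and T = T₁+T₂, then the projection P ∈ π_T(X)′ with T₁ = V_T* P π_T(·)V_T lies in the center π_T(X)′ ∩ π_T(X)″. -/

import Mathlib

open scoped ComplexOrder InnerProductSpace
open TensorProduct

noncomputable section

/-- A matrix over a star ring is positive if it is of the form `Nᴴ * N`. -/
def MatPos {A : Type*} [Ring A] [StarRing A] {n : ℕ}
    (M : Matrix (Fin n) (Fin n) A) : Prop :=
  ∃ N : Matrix (Fin n) (Fin n) A, M = N.conjTranspose * N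

/-- `T` is completely positive if the induced entrywise maps on matrices are positive. -/
def CompletelyPositiveFun {A B : Type*} [Ring A] [StarRing A] [Ring B] [StarRing B]
    (T : A → B) : Prop :=
  ∀ (n : ℕ) (M : Matrix (Fin n) (Fin n) A), MatPos M → MatPos (M.map T)

/-- `(π, K, V)` is a Stinespring representation of `T : X → B(H)`:
`T x = V* (π x) V` for all `x`. -/
def IsStinespring {X : Type*} [NormedRing X] [StarRing X] [CStarRing X]
    [NormedAlgebra ℂ X] [StarModule ℂ X]
    {H K : Type*} [NormedAddCommGroup H] [InnerProductSpace ℂ H] [CompleteSpace H]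
    [NormedAddCommGroup K] [InnerProductSpace ℂ K] [CompleteSpace K]
    (T : X → (H →L[ℂ] H)) (π : X →⋆ₐ[ℂ] (K →L[ℂ] K)) (V : H →L[ℂ] K) : Prop :=
  ∀ x : X, T x = (ContinuousLinearMap.adjoint V).comp ((π x).comp V)

/-- Minimality: the closed linear span of `π(X) V H` is all of `K`. -/
def IsMinimalStinespring {X : Type*} [NormedRing X] [StarRing X] [CStarRing X]
    [NormedAlgebra ℂ X] [StarModule ℂ X]
    {H K : Type*} [NormedAddCommGroup H] [InnerProductSpace ℂ H] [CompleteSpace H]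
    [NormedAddCommGroup K] [InnerProductSpace ℂ K] [CompleteSpace K]
    (π : X →⋆ₐ[ℂ] (K →L[ℂ] K)) (V : H →L[ℂ] K) : Prop :=
  (Submodule.span ℂ {k : K | ∃ (x : X) (h : H), k = π x (V h)}).topologicalClosure = ⊤


lemma clm_ext_of_span_dense' {E F : Type*} [NormedAddCommGroup E] [NormedSpace ℂ E]
    [NormedAddCommGroup F] [NormedSpace ℂ F] {s : Set E}
    (hs : (Submodule.span ℂ s).topologicalClosure = ⊤)
    {f g : E →L[ℂ] F} (h : ∀ a ∈ s, f a = g a) : f = g := by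
  ext v
  have h1 : Submodule.span ℂ s ≤ (f - g).ker := by
    rw [Submodule.span_le]
    intro a ha
    simp only [SetLike.mem_coe, LinearMap.mem_ker, ContinuousLinearMap.coe_sub',
      Pi.sub_apply, sub_eq_zero]
    exact sub_eq_zero.mpr (h a ha)
  have h2 : (Submodule.span ℂ s).topologicalClosure ≤ (f - g).ker :=
    Submodule.topologicalClosure_minimal _ h1 (ContinuousLinearMap.isClosed_ker _)
  have h3 : v ∈ (f - g).ker := h2 (hs ▸ Submodule.mem_top)
  have h4 : (f - g) v = 0 := h3
  rw [ContinuousLinearMap.sub_apply, sub_eq_zero] at h4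
  exact h4

/-- Construction of the canonical intertwiner from a minimal Stinespring space into a
reducing subspace of another Stinespring space inducing the same operator inner products. -/
lemma exists_intertwiner'
    {X : Type*} [NormedRing X] [StarRing X] [CStarRing X]
    [NormedAlgebra ℂ X] [StarModule ℂ X]
    {H K K' : Type*} [NormedAddCommGroup H] [InnerProductSpace ℂ H] [CompleteSpace H]
    [NormedAddCommGroup K] [InnerProductSpace ℂ K] [CompleteSpace K]
    [NormedAddCommGroup K' ] [InnerProductSpace ℂ K'] [CompleteSpace K']
    (π' : X →⋆ₐ[ℂ] (K' →L[ℂ] K')) (V' : H →L[ℂ] K')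
    (hmin' : (Submodule.span ℂ {k : K' | ∃ (x : X) (h : H), k = π' x (V' h)}).topologicalClosure = ⊤)
    (π : X →⋆ₐ[ℂ] (K →L[ℂ] K)) (V : H →L[ℂ] K)
    (Q : K →L[ℂ] K) (hQsa : IsSelfAdjoint Q) (hQi : IsIdempotentElem Q)
    (hQcomm : ∀ x : X, Q * π x = π x * Q)
    (heq : ∀ (x : X) (h h' : H), ⟪V' h, π' x (V' h')⟫_ℂ = ⟪V h, Q (π x (V h'))⟫_ℂ) :
    ∃ S : K' →L[ℂ] K, (∀ (x : X) (h : H), S (π' x (V' h)) = Q (π x (V h))) ∧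
      (∀ x : X, S.comp (π' x) = (π x).comp S) := by
  have hQapp : ∀ u : K, Q (Q u) = Q u := fun u => by
    have := DFunLike.congr_fun hQi u
    simpa [ContinuousLinearMap.mul_apply] using this
  have hQadj : ContinuousLinearMap.adjoint Q = Q := by
    rw [← ContinuousLinearMap.star_eq_adjoint]; exact hQsa.star_eq
  have hQcm : ∀ (x : X) (u : K), Q (π x u) = π x (Q u) := fun x u => by
    have := DFunLike.congr_fun (hQcomm x) u
    simpa [ContinuousLinearMap.mul_apply] using this
  -- key inner product identity on generators
  have key0 : ∀ (x y : X) (h h' : H),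
      ⟪π' x (V' h), π' y (V' h')⟫_ℂ = ⟪Q (π x (V h)), Q (π y (V h'))⟫_ℂ := by
    intro x y h h'
    have lhs : ⟪π' x (V' h), π' y (V' h')⟫_ℂ = ⟪V' h, π' (star x * y) (V' h')⟫_ℂ := by
      rw [← ContinuousLinearMap.adjoint_inner_right (π' x)]
      congr 1
      rw [← ContinuousLinearMap.star_eq_adjoint, ← map_star]
      rw [show π' (star x) ((π' y) (V' h')) = π' (star x * y) (V' h') by rw [map_mul]; rfl]
    have rhs : ⟪Q (π x (V h)), Q (π y (V h'))⟫_ℂ = ⟪V h, Q (π (star x * y) (V h'))⟫_ℂ := by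
      rw [← ContinuousLinearMap.adjoint_inner_right Q, hQadj, hQapp,
        ← ContinuousLinearMap.adjoint_inner_right (π x)]
      congr 1
      rw [← ContinuousLinearMap.star_eq_adjoint, ← map_star, ← hQcm]
      congr 1
      rw [map_mul]; rfl
    rw [lhs, rhs, heq]
  -- bilinear maps and tensor lifts
  let b' : X →ₗ[ℂ] H →ₗ[ℂ] K' := LinearMap.mk₂ ℂ (fun x h => π' x (V' h))
    (fun x y h => by simp [map_add]) (fun c x h => by simp)
    (fun x h h' => by simp) (fun c x h => by simp)
  let b : X →ₗ[ℂ] H →ₗ[ℂ] K := LinearMap.mk₂ ℂ (fun x h => Q (π x (V h)))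
    (fun x y h => by simp [map_add]) (fun c x h => by simp)
    (fun x h h' => by simp) (fun c x h => by simp)
  let Φ : X ⊗[ℂ] H →ₗ[ℂ] K' := TensorProduct.lift b'
  let Ψ : X ⊗[ℂ] H →ₗ[ℂ] K := TensorProduct.lift b
  have hΦ : ∀ (x : X) (h : H), Φ (x ⊗ₜ[ℂ] h) = π' x (V' h) := fun x h => rfl
  have hΨ : ∀ (x : X) (h : H), Ψ (x ⊗ₜ[ℂ] h) = Q (π x (V h)) := fun x h => rfl
  have key : ∀ t s : X ⊗[ℂ] H, ⟪Φ t, Φ s⟫_ℂ = ⟪Ψ t, Ψ s⟫_ℂ := by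
    intro t s
    induction s using TensorProduct.induction_on with
    | zero => simp
    | add u v hu hv => simp only [map_add, inner_add_right, hu, hv]
    | tmul y h' =>
      induction t using TensorProduct.induction_on with
      | zero => simp
      | add u v hu hv => simp only [map_add, inner_add_left, hu, hv]
      | tmul x h => rw [hΦ, hΦ, hΨ, hΨ]; exact key0 x y h h'
  have hker : LinearMap.ker Φ ≤ LinearMap.ker Ψ := by
    intro t ht
    rw [LinearMap.mem_ker] at ht ⊢
    have : ⟪Ψ t, Ψ t⟫_ℂ = 0 := by rw [← key, ht, inner_zero_left]
    exact inner_self_eq_zero.mp this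
  let g : ↥(LinearMap.range Φ) →ₗ[ℂ] K :=
    (Submodule.liftQ (LinearMap.ker Φ) Ψ hker).comp (LinearMap.quotKerEquivRange Φ).symm.toLinearMap
  have hg : ∀ (t : X ⊗[ℂ] H) (hm : Φ t ∈ LinearMap.range Φ), g ⟨Φ t, hm⟩ = Ψ t := by
    intro t hm
    have h1 : (LinearMap.quotKerEquivRange Φ).symm ⟨Φ t, hm⟩
        = Submodule.Quotient.mk t := by
      rw [LinearEquiv.symm_apply_eq]
      exact Subtype.ext (LinearMap.quotKerEquivRange_apply_mk Φ t)
    simp only [g, LinearMap.comp_apply, LinearEquiv.coe_coe, h1, Submodule.liftQ_apply]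
  have hgee : ∀ a b : ↥(LinearMap.range Φ), ⟪g a, g b⟫_ℂ = ⟪(a : K'), (b : K')⟫_ℂ := by
    rintro ⟨_, t, rfl⟩ ⟨_, s, rfl⟩
    exact (congrArg₂ (fun a b => ⟪a, b⟫_ℂ) (hg t (LinearMap.mem_range_self Φ t))
      (hg s (LinearMap.mem_range_self Φ s))).trans (key t s).symm
  have hgn : ∀ a : ↥(LinearMap.range Φ), ‖g a‖ = ‖a‖ := by
    intro a
    have h1 : (‖g a‖ : ℝ) ^ 2 = (‖(a : K')‖ : ℝ) ^ 2 := by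
      have := hgee a a
      rw [inner_self_eq_norm_sq_to_K, inner_self_eq_norm_sq_to_K] at this
      exact_mod_cast this
    have := congrArg Real.sqrt h1
    rwa [Real.sqrt_sq (norm_nonneg _), Real.sqrt_sq (norm_nonneg _)] at this
  let gi : ↥(LinearMap.range Φ) →ₗᵢ[ℂ] K := ⟨g, hgn⟩
  let e : ↥(LinearMap.range Φ) →L[ℂ] K' := (LinearMap.range Φ).subtypeL
  have h_e : IsUniformInducing e := isometry_subtype_coe.isUniformInducing
  have hrange : LinearMap.range Φ
      = Submodule.span ℂ {k : K' | ∃ (x : X) (h : H), k = π' x (V' h)} := by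
    rw [← Submodule.map_top, ← TensorProduct.span_tmul_eq_top ℂ X H, Submodule.map_span]
    congr 1
    ext k
    constructor
    · rintro ⟨_, ⟨x, h, rfl⟩, rfl⟩; exact ⟨x, h, (hΦ x h).symm⟩
    · rintro ⟨x, h, rfl⟩; exact ⟨x ⊗ₜ[ℂ] h, ⟨x, h, rfl⟩, hΦ x h⟩
  have h_dense : DenseRange e := by
    have h1 : Dense (LinearMap.range Φ : Set K') := by
      rw [hrange]
      exact Submodule.dense_iff_topologicalClosure_eq_top.mpr hmin'
    have h2 : Set.range e = (LinearMap.range Φ : Set K') := Subtype.range_coe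
    rw [DenseRange, h2]
    exact h1
  let S : K' →L[ℂ] K := gi.toContinuousLinearMap.extend e
  have hS : ∀ (x : X) (h : H), S (π' x (V' h)) = Q (π x (V h)) := by
    intro x h
    have hmem : Φ (x ⊗ₜ[ℂ] h) ∈ LinearMap.range Φ := LinearMap.mem_range_self Φ _
    have h1 := ContinuousLinearMap.extend_eq gi.toContinuousLinearMap (e := e) h_dense h_e
      ⟨Φ (x ⊗ₜ[ℂ] h), hmem⟩
    have h2 : e ⟨Φ (x ⊗ₜ[ℂ] h), hmem⟩ = π' x (V' h) := hΦ x h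
    have h3 : gi.toContinuousLinearMap ⟨Φ (x ⊗ₜ[ℂ] h), hmem⟩ = Ψ (x ⊗ₜ[ℂ] h) := hg _ hmem
    rw [h2, h3, hΨ] at h1
    exact h1
  refine ⟨S, hS, ?_⟩
  intro x
  apply clm_ext_of_span_dense' hmin'
  rintro a ⟨y, h, rfl⟩
  simp only [ContinuousLinearMap.comp_apply]
  have h1 : π' x (π' y (V' h)) = π' (x * y) (V' h) := by
    rw [map_mul]; rfl
  rw [h1, hS, hS, ← hQcm]
  congr 1
  rw [map_mul]; rfl


/-- If `T₁, T₂` are CP maps with disjoint minimal Stinespring representations (every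
intertwiner between `π₁` and `π₂` is zero) and `T = T₁ + T₂`, then the projection
`P ∈ π(X)′` implementing `T₁` lies in the center `π(X)′ ∩ π(X)″`, i.e. `P` commutes
with every element of the commutant of `π(X)`. -/
theorem projection_central_of_disjoint
    {X : Type*} [NormedRing X] [StarRing X] [CStarRing X]
    [NormedAlgebra ℂ X] [StarModule ℂ X]
    {H K K₁ K₂ : Type*} [NormedAddCommGroup H] [InnerProductSpace ℂ H] [CompleteSpace H]
    [NormedAddCommGroup K] [InnerProductSpace ℂ K] [CompleteSpace K]
    [NormedAddCommGroup K₁] [InnerProductSpace ℂ K₁] [CompleteSpace K₁]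
    [NormedAddCommGroup K₂] [InnerProductSpace ℂ K₂] [CompleteSpace K₂]
    (T₁ T₂ : X →ₗ[ℂ] (H →L[ℂ] H))
    (hT₁ : CompletelyPositiveFun (⇑T₁)) (hT₂ : CompletelyPositiveFun (⇑T₂))
    (π₁ : X →⋆ₐ[ℂ] (K₁ →L[ℂ] K₁)) (V₁ : H →L[ℂ] K₁)
    (hst₁ : IsStinespring (⇑T₁) π₁ V₁) (hmin₁ : IsMinimalStinespring π₁ V₁)
    (π₂ : X →⋆ₐ[ℂ] (K₂ →L[ℂ] K₂)) (V₂ : H →L[ℂ] K₂)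
    (hst₂ : IsStinespring (⇑T₂) π₂ V₂) (hmin₂ : IsMinimalStinespring π₂ V₂)
    (hdisj : ∀ W : K₁ →L[ℂ] K₂, (∀ x : X, W.comp (π₁ x) = (π₂ x).comp W) → W = 0)
    (π : X →⋆ₐ[ℂ] (K →L[ℂ] K)) (V : H →L[ℂ] K)
    (hst : IsStinespring (fun x => T₁ x + T₂ x) π V) (hmin : IsMinimalStinespring π V)
    (P : K →L[ℂ] K) (hproj : IsIdempotentElem P) (hsa : IsSelfAdjoint P)
    (hcomm : ∀ x : X, P * π x = π x * P)
    (h₁ : ∀ x : X, T₁ x = (ContinuousLinearMap.adjoint V).comp (P.comp ((π x).comp V)))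
    (h₂ : ∀ x : X, T₂ x =
      (ContinuousLinearMap.adjoint V).comp ((1 - P).comp ((π x).comp V))) :
    ∀ B : K →L[ℂ] K, (∀ x : X, B * π x = π x * B) → P * B = B * P := by
  have hst₁ : ∀ x : X, T₁ x = (ContinuousLinearMap.adjoint V₁).comp ((π₁ x).comp V₁) := hst₁
  have hst₂ : ∀ x : X, T₂ x = (ContinuousLinearMap.adjoint V₂).comp ((π₂ x).comp V₂) := hst₂
  have hmin₁ : (Submodule.span ℂ
      {k : K₁ | ∃ (x : X) (h : H), k = π₁ x (V₁ h)}).topologicalClosure = ⊤ := hmin₁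
  have hmin₂ : (Submodule.span ℂ
      {k : K₂ | ∃ (x : X) (h : H), k = π₂ x (V₂ h)}).topologicalClosure = ⊤ := hmin₂
  have hmin : (Submodule.span ℂ
      {k : K | ∃ (x : X) (h : H), k = π x (V h)}).topologicalClosure = ⊤ := hmin
  -- properties of 1 - P
  have hsa' : IsSelfAdjoint (1 - P) := (IsSelfAdjoint.one (R := K →L[ℂ] K)).sub hsa
  have hproj' : IsIdempotentElem (1 - P) := hproj.one_sub
  have hcomm' : ∀ x : X, (1 - P) * π x = π x * (1 - P) := by
    intro x
    rw [sub_mul, one_mul, mul_sub, mul_one, hcomm]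
  -- inner product identities on generators
  have heqP : ∀ (x : X) (h h' : H), ⟪V₁ h, π₁ x (V₁ h')⟫_ℂ = ⟪V h, P (π x (V h'))⟫_ℂ := by
    intro x h h'
    rw [← ContinuousLinearMap.adjoint_inner_right V₁, ← ContinuousLinearMap.adjoint_inner_right V]
    congr 1
    have l := DFunLike.congr_fun (hst₁ x) h'
    have r := DFunLike.congr_fun (h₁ x) h'
    simp only [ContinuousLinearMap.comp_apply] at l r
    rw [← l, ← r]
  have heqQ : ∀ (x : X) (h h' : H), ⟪V₂ h, π₂ x (V₂ h')⟫_ℂ = ⟪V h, (1 - P) (π x (V h'))⟫_ℂ := by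
    intro x h h'
    rw [← ContinuousLinearMap.adjoint_inner_right V₂, ← ContinuousLinearMap.adjoint_inner_right V]
    congr 1
    have l := DFunLike.congr_fun (hst₂ x) h'
    have r := DFunLike.congr_fun (h₂ x) h'
    simp only [ContinuousLinearMap.comp_apply] at l r
    rw [← l, ← r]
  obtain ⟨S₁, hS₁, hint₁⟩ := exists_intertwiner' π₁ V₁ hmin₁ π V P hsa hproj hcomm heqP
  obtain ⟨S₂, hS₂, hint₂⟩ := exists_intertwiner' π₂ V₂ hmin₂ π V (1 - P) hsa' hproj' hcomm' heqQ
  -- adjoint of S₂ intertwines in the other direction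
  have hadj₂ : ∀ x : X, (ContinuousLinearMap.adjoint S₂).comp (π x)
      = (π₂ x).comp (ContinuousLinearMap.adjoint S₂) := by
    intro x
    have h0 := hint₂ (star x)
    have h1 := congrArg ContinuousLinearMap.adjoint h0
    rw [ContinuousLinearMap.adjoint_comp, ContinuousLinearMap.adjoint_comp] at h1
    have e1 : ContinuousLinearMap.adjoint (π₂ (star x)) = π₂ x := by
      rw [← ContinuousLinearMap.star_eq_adjoint, ← map_star, star_star]
    have e2 : ContinuousLinearMap.adjoint (π (star x)) = π x := by
      rw [← ContinuousLinearMap.star_eq_adjoint, ← map_star, star_star]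
    rw [e1, e2] at h1
    exact h1.symm
  -- main step: for any B in the commutant, (1-P) B P = 0
  have main : ∀ B : K →L[ℂ] K, (∀ x : X, B * π x = π x * B) →
      (1 - P) * (B * P) = 0 := by
    intro B hB
    set W : K₁ →L[ℂ] K₂ := (ContinuousLinearMap.adjoint S₂).comp (B.comp S₁) with hWdef
    have hW : ∀ x : X, W.comp (π₁ x) = (π₂ x).comp W := by
      intro x
      ext a
      simp only [hWdef, ContinuousLinearMap.comp_apply]
      have e1 : S₁ (π₁ x a) = π x (S₁ a) := by
        have := DFunLike.congr_fun (hint₁ x) a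
        simpa [ContinuousLinearMap.comp_apply] using this
      have e2 : B (π x (S₁ a)) = π x (B (S₁ a)) := by
        have := DFunLike.congr_fun (hB x) (S₁ a)
        simpa [ContinuousLinearMap.mul_apply] using this
      have e3 : (ContinuousLinearMap.adjoint S₂) (π x (B (S₁ a)))
          = π₂ x ((ContinuousLinearMap.adjoint S₂) (B (S₁ a))) := by
        have := DFunLike.congr_fun (hadj₂ x) (B (S₁ a))
        simpa [ContinuousLinearMap.comp_apply] using this
      rw [e1, e2, e3]
    have hW0 : W = 0 := hdisj W hW
    -- step A
    have hA : (ContinuousLinearMap.adjoint S₂).comp (B.comp P) = 0 := by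
      apply clm_ext_of_span_dense' hmin
      rintro a ⟨x, h, rfl⟩
      simp only [ContinuousLinearMap.comp_apply, ContinuousLinearMap.zero_apply]
      rw [← hS₁ x h]
      have := DFunLike.congr_fun hW0 (π₁ x (V₁ h))
      simpa [hWdef, ContinuousLinearMap.comp_apply] using this
    -- step B
    have hsub : ContinuousLinearMap.adjoint (1 - P) = 1 - P := by
      rw [← ContinuousLinearMap.star_eq_adjoint]; exact hsa'.star_eq
    ext v
    simp only [ContinuousLinearMap.mul_apply, ContinuousLinearMap.zero_apply]
    set w : K := (1 - P) (B (P v)) with hwdef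
    have hfun : (innerSL ℂ w : K →L[ℂ] ℂ) = 0 := by
      apply clm_ext_of_span_dense' hmin
      rintro a ⟨y, h, rfl⟩
      simp only [innerSL_apply_apply, ContinuousLinearMap.zero_apply]
      calc ⟪w, π y (V h)⟫_ℂ
          = ⟪B (P v), (1 - P) (π y (V h))⟫_ℂ := by
            have h5 := ContinuousLinearMap.adjoint_inner_left (1 - P) (π y (V h)) (B (P v))
            rw [hsub] at h5
            rw [hwdef]
            exact h5
        _ = ⟪B (P v), S₂ (π₂ y (V₂ h))⟫_ℂ := by rw [hS₂ y h]
        _ = ⟪(ContinuousLinearMap.adjoint S₂) (B (P v)), π₂ y (V₂ h)⟫_ℂ :=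
            (ContinuousLinearMap.adjoint_inner_left S₂ _ _).symm
        _ = 0 := by
            have := DFunLike.congr_fun hA v
            simp only [ContinuousLinearMap.comp_apply, ContinuousLinearMap.zero_apply] at this
            rw [this, inner_zero_left]
    have : ⟪w, w⟫_ℂ = 0 := by
      have := DFunLike.congr_fun hfun w
      simpa using this
    exact inner_self_eq_zero.mp this
  intro B hB
  have hBstar : ∀ x : X, star B * π x = π x * star B := by
    intro x
    calc star B * π x = star B * star (π (star x)) := by rw [map_star, star_star]
      _ = star (π (star x) * B) := (star_mul _ _).symm
      _ = star (B * π (star x)) := by rw [hB (star x)]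
      _ = star (π (star x)) * star B := star_mul _ _
      _ = π x * star B := by rw [map_star, star_star]
  have hBP : (1 - P) * (B * P) = 0 := main B hB
  have hBsP : (1 - P) * (star B * P) = 0 := main (star B) hBstar
  have hPB : P * B * (1 - P) = 0 := by
    have h0 := congrArg star hBsP
    rw [star_mul, star_mul, star_star, star_zero, hsa.star_eq, star_sub, star_one,
      hsa.star_eq] at h0
    exact h0
  have e1 : B * P = P * (B * P) := by
    have := hBP
    rw [sub_mul, one_mul, sub_eq_zero] at this
    exact this
  have e2 : P * B = P * B * P := by
    have := hPB
    rw [mul_sub, mul_one, sub_eq_zero] at this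
    exact this
  rw [e2, mul_assoc, ← e1]
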